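/- If X is D-pseudocompact for some regular ultrafilter D over μ, then every Tychonoff power X^κ of X is weakly initially μ-compact. -/

import Mathlib

open Cardinal Set

universe u v

/-- `x` is a `D`-limit point of the family of sets `O`. -/
def DLimitSets {X : Type u} {I : Type v} [TopologicalSpace X]
    (D : Ultrafilter I) (O : I → Set X) (x : X) : Prop :=
  ∀ U ∈ nhds x, {i | (U ∩ O i).Nonempty} ∈ D

/-- `X` is `D`-pseudocompact. -/
def DPseudocompact (X : Type u) {I : Type v} [TopologicalSpace X]
    (D : Ultrafilter I) : Prop :=
  ∀ O : I → Set X, (∀ i, IsOpen (O i)) → (∀ i, (O i).Nonempty) →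
    ∃ x : X, DLimitSets D O x

/-- Every open cover of cardinality at most `lam` has a finite subfamily with dense union. -/
def WeaklyInitiallyCompact (X : Type u) [TopologicalSpace X] (lam : Cardinal.{u}) : Prop :=
  ∀ 𝒰 : Set (Set X), (∀ U ∈ 𝒰, IsOpen U) → ⋃₀ 𝒰 = Set.univ →
    Cardinal.mk 𝒰 ≤ lam →
    ∃ t : Finset (Set X), ↑t ⊆ 𝒰 ∧ Dense (⋃₀ (t : Set (Set X)))

/-- A regular ultrafilter over `I` (regular of degree `|I|`): there is an `I`-indexed
family of members of `D` every infinite subfamily of which has empty intersection. -/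
def RegularUltrafilter {I : Type v} (D : Ultrafilter I) : Prop :=
  ∃ Z : I → Set I, (∀ i, Z i ∈ D) ∧
    ∀ S : Set I, S.Infinite → ⋂ i ∈ S, Z i = ∅

/-- D-pseudocompactness is productive (for powers). -/
theorem power_dPseudocompact {X : Type u} {I : Type v} [TopologicalSpace X]
    (D : Ultrafilter I) (hX : DPseudocompact X D) (κ : Type u) :
    DPseudocompact (κ → X) D := by
  classical
  intro O hopen hne
  choose f hf using hne
  have h := fun j => (isOpen_pi_iff.mp (hopen j)) (f j) (hf j)
  choose s V hV hsub using h
  set W : I → κ → Set X := fun j k => if k ∈ s j then V j k else univ with hWdef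
  have hWopen : ∀ j k, IsOpen (W j k) := by
    intro j k
    by_cases hk : k ∈ s j
    · simpa [hWdef, hk] using (hV j k hk).1
    · simp [hWdef, hk]
  have hWne : ∀ j k, f j k ∈ W j k := by
    intro j k
    by_cases hk : k ∈ s j
    · simpa [hWdef, hk] using (hV j k hk).2
    · simp [hWdef, hk]
  have hx := fun k => hX (fun j => W j k) (fun j => hWopen j k) (fun j => ⟨f j k, hWne j k⟩)
  choose x hx using hx
  refine ⟨x, ?_⟩
  intro U hU
  rcases mem_nhds_iff.mp hU with ⟨U', hU'U, hU'open, hxU'⟩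
  rcases isOpen_pi_iff.mp hU'open x hxU' with ⟨t, u, hu, htu⟩
  have hmem : (⋂ k ∈ (t : Set κ), {j | (u k ∩ W j k).Nonempty}) ∈ (D : Filter I) := by
    rw [Filter.biInter_mem t.finite_toSet]
    intro k hk
    exact hx k (u k) ((hu k hk).1.mem_nhds (hu k hk).2)
  refine Filter.mem_of_superset hmem ?_
  intro j hj
  simp only [mem_iInter, mem_setOf_eq] at hj
  have hne2 : ∀ k, ((if k ∈ t then u k else univ) ∩ W j k).Nonempty := by
    intro k
    by_cases hk : k ∈ t
    · simpa [hk] using hj k hk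
    · exact ⟨f j k, by simp [hk], hWne j k⟩
  choose g hg using hne2
  refine ⟨g, hU'U (htu ?_), hsub j ?_⟩
  · intro k hk
    rw [Finset.mem_coe] at hk
    have := (hg k).1
    simpa [hk] using this
  · intro k hk
    rw [Finset.mem_coe] at hk
    have := (hg k).2
    simpa [hWdef, hk] using this

theorem aux_weakly {Y : Type u} {I : Type u} [TopologicalSpace Y]
    (D : Ultrafilter I) (hreg : RegularUltrafilter D) (hY : DPseudocompact Y D) :
    WeaklyInitiallyCompact Y (Cardinal.mk I) := by
  classical
  intro 𝒰 hopen hcov hcard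
  by_contra hcon
  push_neg at hcon
  rcases Set.eq_empty_or_nonempty 𝒰 with h𝒰 | h𝒰
  · subst h𝒰
    rw [Set.sUnion_empty] at hcov
    refine hcon ∅ (by simp) ?_
    intro y
    have : y ∈ (∅ : Set Y) := hcov ▸ Set.mem_univ y
    exact absurd this (Set.notMem_empty y)
  obtain ⟨Z, hZ, hZint⟩ := hreg
  have hfinZ : ∀ j, {i | j ∈ Z i}.Finite := by
    intro j
    by_contra h
    have hj : j ∈ ⋂ i ∈ {i | j ∈ Z i}, Z i := by
      simp only [Set.mem_iInter, Set.mem_setOf_eq]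
      exact fun i hi => hi
    rw [hZint _ h] at hj
    exact hj
  have : Nonempty 𝒰 := h𝒰.to_subtype
  obtain ⟨e⟩ := Cardinal.le_def _ _ |>.mp hcard
  set Uf : I → Set Y := fun i => ((Function.invFun e i : ↥𝒰) : Set Y) with hUf
  have hUfmem : ∀ i, Uf i ∈ 𝒰 := fun i => (Function.invFun e i).2
  have hUfsurj : ∀ U ∈ 𝒰, ∃ i, Uf i = U := by
    intro U hU
    obtain ⟨a, ha⟩ := Function.invFun_surjective e.injective ⟨U, hU⟩
    exact ⟨a, by rw [hUf]; simp [ha]⟩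
  set T : I → Finset (Set Y) := fun j => (hfinZ j).toFinset.image Uf with hT
  have hTsub : ∀ j, ↑(T j) ⊆ 𝒰 := by
    intro j U hU
    simp only [hT, Finset.coe_image, Set.mem_image] at hU
    obtain ⟨i, _, rfl⟩ := hU
    exact hUfmem i
  have hnd : ∀ j, ¬ Dense (⋃₀ (T j : Set (Set Y))) := fun j => hcon (T j) (hTsub j)
  have hOne : ∀ j, ((closure (⋃₀ (T j : Set (Set Y))))ᶜ).Nonempty := by
    intro j
    rcases not_forall.mp (hnd j) with ⟨y, hy⟩
    exact ⟨y, hy⟩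
  obtain ⟨x, hxlim⟩ := hY (fun j => (closure (⋃₀ (T j : Set (Set Y))))ᶜ)
    (fun j => isClosed_closure.isOpen_compl) hOne
  have hxmem : x ∈ ⋃₀ 𝒰 := hcov ▸ Set.mem_univ x
  obtain ⟨U, hU𝒰, hxU⟩ := hxmem
  obtain ⟨i₀, rfl⟩ := hUfsurj U hU𝒰
  have hA : {j | (Uf i₀ ∩ (closure (⋃₀ (T j : Set (Set Y))))ᶜ).Nonempty} ∈ D :=
    hxlim _ ((hopen _ hU𝒰).mem_nhds hxU)
  have hAZ : ({j | (Uf i₀ ∩ (closure (⋃₀ (T j : Set (Set Y))))ᶜ).Nonempty} ∩ Z i₀).Nonempty :=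
    Ultrafilter.nonempty_of_mem (Filter.inter_mem hA (hZ i₀))
  obtain ⟨j, hjA, hjZ⟩ := hAZ
  obtain ⟨y, hyU, hyO⟩ := hjA
  apply hyO
  apply subset_closure
  refine ⟨Uf i₀, ?_, hyU⟩
  simp only [hT, Finset.coe_image, Set.mem_image]
  exact ⟨i₀, by simp [hjZ], rfl⟩

theorem dPseudocompact_regular_implies_power_weaklyInitiallyCompact
    {X : Type u} [TopologicalSpace X] (I : Type u) [Infinite I]
    (D : Ultrafilter I) (hreg : RegularUltrafilter D)
    (hX : DPseudocompact X D) (κ : Type u) :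
    WeaklyInitiallyCompact (κ → X) (Cardinal.mk I) :=
  aux_weakly D hreg (power_dPseudocompact D hX κ)
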